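/- There exists a function f̄ : P²(F₂) → Z/2 such that the restriction of f̄ to every projective line in P²(F₂) is an abelian flag function (equivalently: constant on the complement of at most one point of the line), but f̄ itself is not an abelian flag function on (Z/2)³. Concretely: with basis ē₁, ē₂, ē₃, the function with f̄(ē₁+ē₃) = f̄(ē₂+ē₃) = f̄(ē₁+ē₂+ē₃) = 0 and f̄ = 1 on the other four points of P²(F₂) has this property. -/

import Mathlib

/-- A function on an abelian group is invariant if `f (n • a) = f a` for all nonzero
integers `n`. -/
def InvariantZ {A : Type*} [AddCommGroup A] {S : Type*} (f : A → S) : Prop :=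
  ∀ n : ℤ, n ≠ 0 → ∀ a : A, f (n • a) = f a

/-- `f` admits a strict filtration of `A` by subgroups, indexed by a totally ordered set,
exhausting `A`, such that `f` is constant on each successive difference set
`A_ι \ ⋃_{ι' > ι} A_{ι'}`. -/
def HasFlagFiltration {A : Type*} [AddCommGroup A] {S : Type*} (f : A → S) : Prop :=
  ∃ (I : Type) (lo : LinearOrder I) (F : I → AddSubgroup A),
    (∀ a : A, ∃ i : I, a ∈ F i) ∧
    (∀ i j : I, lo.lt i j → F j < F i) ∧
    (∀ (i : I) (x y : A), x ∈ F i → (∀ j : I, lo.lt i j → x ∉ F j) →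
      y ∈ F i → (∀ j : I, lo.lt i j → y ∉ F j) → f x = f y)

/-- Abelian flag function on a finitely generated torsion-free abelian group. -/
def IsAF {A : Type*} [AddCommGroup A] {S : Type*} (f : A → S) : Prop :=
  InvariantZ f ∧ HasFlagFiltration f


def InvariantCop {A : Type*} [AddCommGroup A] {S : Type*} (q : ℕ) (f : A → S) : Prop :=
  ∀ n : ℤ, IsCoprime n (q : ℤ) → ∀ a : A, f (n • a) = f a



private def fEx : (Fin 3 → ZMod 2) → ZMod 2 := fun x =>
  if x = ![1,0,1] ∨ x = ![0,1,1] ∨ x = ![1,1,1] then 0 else 1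

private lemma line_lemma (f : (Fin 3 → ZMod 2) → ZMod 2)
    (W : Submodule (ZMod 2) (Fin 3 → ZMod 2))
    (hW : Module.finrank (ZMod 2) W = 2) :
    ∃ (x₀ : Fin 3 → ZMod 2) (s : ZMod 2), ∀ x ∈ W, x ≠ 0 → x ≠ x₀ → f x = s := by
  classical
  by_cases hc : ∀ x ∈ W, x ≠ 0 → ∀ y ∈ W, y ≠ 0 → f x = f y
  · have hWbot : W ≠ ⊥ := by
      intro h
      rw [h] at hW
      simp at hW
    obtain ⟨w, hwW, hw0⟩ := Submodule.exists_mem_ne_zero_of_ne_bot hWbot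
    exact ⟨0, f w, fun x hx hx0 _ => hc x hx hx0 w hwW hw0⟩
  · push_neg at hc
    obtain ⟨u, hu, hu0, v, hv, hv0, hne⟩ := hc
    have huv : u ≠ v := fun h => hne (by rw [h])
    have hcase : ∀ a : ZMod 2, a = 0 ∨ a = 1 := by decide
    have hli : LinearIndependent (ZMod 2) ![u, v] := by
      rw [linearIndependent_fin2]
      refine ⟨by simpa using hv0, fun a ha => ?_⟩
      rcases hcase a with rfl | rfl
      · simp at ha
        exact hu0 ha.symm
      · simp at ha
        exact huv ha.symm
    have hsp : Submodule.span (ZMod 2) {u, v} = W := by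
      apply Submodule.eq_of_le_of_finrank_le
      · rw [Submodule.span_le]
        intro x hx
        rcases hx with rfl | rfl
        · exact hu
        · exact hv
      · have hrg : Set.range ![u, v] = {u, v} := by
          ext x
          simp [Fin.exists_fin_two, or_comm]
        have h2 : Module.finrank (ZMod 2) (Submodule.span (ZMod 2) {u, v}) = 2 := by
          have := finrank_span_eq_card hli
          rw [hrg] at this
          simpa using this
        rw [hW, h2]
    have hmem : ∀ x ∈ W, x = 0 ∨ x = u ∨ x = v ∨ x = u + v := by
      intro x hx
      rw [← hsp, Submodule.mem_span_pair] at hx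
      obtain ⟨a, b, rfl⟩ := hx
      rcases hcase a with rfl | rfl <;> rcases hcase b with rfl | rfl <;> simp
    have hfuv : f (u + v) = f u ∨ f (u + v) = f v := by
      have : ∀ a b c : ZMod 2, a ≠ b → c = a ∨ c = b := by decide
      exact this _ _ _ hne
    rcases hfuv with h | h
    · refine ⟨v, f u, fun x hx hx0 hxv => ?_⟩
      rcases hmem x hx with rfl | rfl | rfl | rfl
      · exact absurd rfl hx0
      · rfl
      · exact absurd rfl hxv
      · exact h
    · refine ⟨u, f v, fun x hx hx0 hxu => ?_⟩
      rcases hmem x hx with rfl | rfl | rfl | rfl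
      · exact absurd rfl hx0
      · exact absurd rfl hxu
      · rfl
      · exact h

private lemma not_flag : ¬ HasFlagFiltration fEx := by
  classical
  rintro ⟨I, lo, F, hex, hlt, hconst⟩
  letI : LinearOrder I := lo
  have hlt' : ∀ i j : I, i < j → F j < F i := hlt
  have hFinj : Function.Injective fun i => ((F i : AddSubgroup _) : Set (Fin 3 → ZMod 2)) := by
    intro i j hij
    by_contra hne
    rcases lt_trichotomy i j with h | h | h
    · exact (hlt' i j h).ne (SetLike.ext' hij).symm
    · exact hne h
    · exact (hlt' j i h).ne (SetLike.ext' hij)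
  haveI : Finite I := Finite.of_injective _ hFinj
  haveI : Nonempty I := (hex 0).elim fun i _ => ⟨i⟩
  have hmaxall : ∀ x : Fin 3 → ZMod 2, ∃ i, x ∈ F i ∧ ∀ j, x ∈ F j → j ≤ i := by
    intro x
    have hne : {i | x ∈ F i}.Nonempty := hex x
    obtain ⟨i, hi, hm⟩ := Set.Finite.exists_maximalFor id {i | x ∈ F i}
      (Set.toFinite _) hne
    refine ⟨i, hi, fun j hj => le_of_not_gt fun h => ?_⟩
    have heq : i = j := le_antisymm h.le (hm hj h.le)
    exact lt_irrefl i (heq ▸ h)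
  choose m hm₁ hm₂ using hmaxall
  have hmem : ∀ (x : Fin 3 → ZMod 2) (i : I), i ≤ m x → x ∈ F i := by
    intro x i hi
    rcases eq_or_lt_of_le hi with rfl | h
    · exact hm₁ x
    · exact (hlt' i (m x) h).le (hm₁ x)
  have hnot : ∀ (x : Fin 3 → ZMod 2) (j : I), m x < j → x ∉ F j :=
    fun x j h hx => absurd (hm₂ x j hx) (not_le.2 h)
  have hsame : ∀ x y, m x = m y → fEx x = fEx y := by
    intro x y h
    refine hconst (m x) x y (hm₁ x) (fun j hj => hnot x j hj) ?_ ?_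
    · exact hmem y (m x) h.le
    · intro j hj
      exact hnot y j (h ▸ hj)
  have hadd : ∀ x y : Fin 3 → ZMod 2, min (m x) (m y) ≤ m (x + y) := by
    intro x y
    exact hm₂ _ _ (AddSubgroup.add_mem _ (hmem x _ (min_le_left _ _)) (hmem y _ (min_le_right _ _)))
  set e1 : Fin 3 → ZMod 2 := ![1,0,0] with he1
  set e2 : Fin 3 → ZMod 2 := ![0,1,0] with he2
  set e3 : Fin 3 → ZMod 2 := ![0,0,1] with he3
  set a : Fin 3 → ZMod 2 := ![1,0,1] with ha
  set b : Fin 3 → ZMod 2 := ![0,1,1] with hb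
  set c : Fin 3 → ZMod 2 := ![1,1,1] with hc
  set j : I := min (min (m e1) (m e2)) (m e3) with hj
  -- F j = everything
  have hje1 : j ≤ m e1 := le_trans (min_le_left _ _) (min_le_left _ _)
  have hje2 : j ≤ m e2 := le_trans (min_le_left _ _) (min_le_right _ _)
  have hje3 : j ≤ m e3 := min_le_right _ _
  have htop : ∀ x : Fin 3 → ZMod 2, x ∈ F j := by
    have h1 : e1 ∈ F j := hmem e1 j hje1
    have h2 : e2 ∈ F j := hmem e2 j hje2
    have h3 : e3 ∈ F j := hmem e3 j hje3
    intro x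
    have : x = 0 ∨ x = e1 ∨ x = e2 ∨ x = e3 ∨ x = e1 + e2 ∨ x = e1 + e3 ∨
        x = e2 + e3 ∨ x = e1 + e2 + e3 := by
      rw [he1, he2, he3]; revert x; decide
    rcases this with rfl | rfl | rfl | rfl | rfl | rfl | rfl | rfl
    · exact AddSubgroup.zero_mem _
    · exact h1
    · exact h2
    · exact h3
    all_goals first
      | exact AddSubgroup.add_mem _ h1 h2
      | exact AddSubgroup.add_mem _ h1 h3
      | exact AddSubgroup.add_mem _ h2 h3
      | exact AddSubgroup.add_mem _ (AddSubgroup.add_mem _ h1 h2) h3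
  have hjle : ∀ x : Fin 3 → ZMod 2, j ≤ m x := fun x => hm₂ x j (htop x)
  -- there is a basis vector at the min
  have hstrat : ∃ t : Fin 3 → ZMod 2, fEx t = 1 ∧ m t = j := by
    rcases le_total (min (m e1) (m e2)) (m e3) with h | h
    · rcases le_total (m e1) (m e2) with h' | h'
      · exact ⟨e1, by rw [he1]; decide, le_antisymm (by rw [hj, min_eq_left h, min_eq_left h']) hje1⟩
      · exact ⟨e2, by rw [he2]; decide, le_antisymm (by rw [hj, min_eq_left h, min_eq_right h']) hje2⟩
    · exact ⟨e3, by rw [he3]; decide, le_antisymm (by rw [hj, min_eq_right h]) hje3⟩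
  obtain ⟨t, hft, hmt⟩ := hstrat
  have hzero : ∀ y : Fin 3 → ZMod 2, fEx y = 0 → j < m y := by
    intro y hy
    rcases lt_or_eq_of_le (hjle y) with h | h
    · exact h
    · exfalso
      have := hsame y t (by rw [← h, hmt])
      rw [hy, hft] at this
      exact absurd this (by decide)
  have hza : j < m a := hzero a (by rw [ha]; decide)
  have hzb : j < m b := hzero b (by rw [hb]; decide)
  have hzc : j < m c := hzero c (by rw [hc]; decide)
  have hme2 : j < m e2 := by
    have hac : a + c = e2 := by rw [ha, hc, he2]; decide
    calc j < min (m a) (m c) := lt_min hza hzc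
    _ ≤ m (a + c) := hadd a c
    _ = m e2 := by rw [hac]
  have hme1 : j < m e1 := by
    have hbc : b + c = e1 := by rw [hb, hc, he1]; decide
    calc j < min (m b) (m c) := lt_min hzb hzc
    _ ≤ m (b + c) := hadd b c
    _ = m e1 := by rw [hbc]
  have hme3 : j < m e3 := by
    have hae1 : a + e1 = e3 := by rw [ha, he1, he3]; decide
    calc j < min (m a) (m e1) := lt_min hza hme1
    _ ≤ m (a + e1) := hadd a e1
    _ = m e3 := by rw [hae1]
  have : j < j := by
    rw [hj]
    exact lt_min (lt_min hme1 hme2) hme3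
  exact lt_irrefl j this

/-- there is a function on `P²(F₂)` (equivalently, on `(ℤ/2)³`) whose
restriction to every projective line is constant off at most one point (hence an abelian
flag function on every line), but which is not an abelian flag function on `(ℤ/2)³`;
concretely the function vanishing exactly at `ē₁+ē₃, ē₂+ē₃, ē₁+ē₂+ē₃`. -/
theorem stmt_7 :
    ∃ f : (Fin 3 → ZMod 2) → ZMod 2,
      (∀ W : Submodule (ZMod 2) (Fin 3 → ZMod 2), Module.finrank (ZMod 2) W = 2 →
        ∃ (x₀ : Fin 3 → ZMod 2) (s : ZMod 2), ∀ x ∈ W, x ≠ 0 → x ≠ x₀ → f x = s) ∧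
      InvariantCop 2 f ∧ ¬ HasFlagFiltration f ∧
      (f (Pi.single 0 1 + Pi.single 2 1) = 0 ∧
       f (Pi.single 1 1 + Pi.single 2 1) = 0 ∧
       f (Pi.single 0 1 + Pi.single 1 1 + Pi.single 2 1) = 0 ∧
       f (Pi.single 0 1) = 1 ∧ f (Pi.single 1 1) = 1 ∧ f (Pi.single 2 1) = 1 ∧
       f (Pi.single 0 1 + Pi.single 1 1) = 1) := by
  refine ⟨fEx, line_lemma fEx, ?_, not_flag, by decide, by decide, by decide, by decide,
    by decide, by decide, by decide⟩
  intro n hn x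
  have h2 : ¬ (2 : ℤ) ∣ n := by
    intro hd
    have := IsCoprime.isUnit_of_dvd' hn hd dvd_rfl
    rw [Int.isUnit_iff] at this
    omega
  have hodd : Odd n := by
    rcases Int.even_or_odd n with he | ho
    · exact absurd he.two_dvd h2
    · exact ho
  obtain ⟨k, hk⟩ := hodd
  have hxx : x + x = 0 := by
    funext i
    have : ∀ z : ZMod 2, z + z = 0 := by decide
    exact this (x i)
  have : n • x = x := by
    rw [hk, add_zsmul, one_zsmul, mul_comm, mul_zsmul, two_zsmul, hxx, smul_zero, zero_add]
  rw [this]
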